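/- arXiv:1607.04431 — 3 statements merged into one kernel-verified Lean document; each statement's English description precedes it below -/
import Mathlib

section
/- Let G be a 2-edge-connected graph (finite, undirected; parallel edges and self-loops allowed) with an edge st that is not a self-loop. Then G has a (1,1)-edge-order through st. -/
namespace EdgeOrders

variable {V E V' E' : Type}

/-- A multigraph on vertex type `V` and edge type `E` is given by a map `ends`
sending each edge to the unordered pair of its endpoints (self-loops and
parallel edges are allowed).
`IsWalkSeq ends vs es` states that `vs` is the vertex sequence and `es` the
edge sequence of a walk in this multigraph. -/
inductive IsWalkSeq (ends : E → Sym2 V) : List V → List E → Prop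
  | nil (v : V) : IsWalkSeq ends [v] []
  | cons {u v : V} {vs : List V} {e : E} {es : List E} :
      ends e = s(u, v) → IsWalkSeq ends (v :: vs) es →
      IsWalkSeq ends (u :: v :: vs) (e :: es)

/-- There is a walk from `u` to `v` using only edges from `S`. -/
def HasWalk (ends : E → Sym2 V) (S : Set E) (u v : V) : Prop :=
  ∃ vs es, IsWalkSeq ends vs es ∧ vs.head? = some u ∧ vs.getLast? = some v ∧
    ∀ e ∈ es, e ∈ S

/-- A multigraph is `k`-edge-connected if it has at least two vertices and no
edge-cut of size less than `k`: removing fewer than `k` edges leaves all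
vertices connected to each other. -/
def EdgeConnected [Fintype V] [Fintype E] (ends : E → Sym2 V) (k : ℕ) : Prop :=
  2 ≤ Fintype.card V ∧
    ∀ F : Finset E, F.card < k → ∀ u v : V, HasWalk ends {e | e ∉ F} u v

/-- Two edges are neighbors if they share a common vertex. -/
def Neighbors (ends : E → Sym2 V) (e f : E) : Prop :=
  ∃ x, x ∈ ends e ∧ x ∈ ends f

/-- A (1,1)-edge-order through the (non-self-loop) edge `st` with endpoints
`s` and `t`: a (strict) total order `lt` on `E - {st}` such that `m ≥ 2`,
every edge not incident to `s` has a smaller neighbor and every edge not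
incident to `t` has a larger neighbor. -/
def IsOneOneEdgeOrder [Fintype E] (ends : E → Sym2 V) (s t : V) (st : E)
    (lt : E → E → Prop) : Prop :=
  2 ≤ Fintype.card E ∧
  (∀ e f, lt e f → e ≠ st ∧ f ≠ st) ∧
  (∀ e, ¬ lt e e) ∧
  (∀ e f g, lt e f → lt f g → lt e g) ∧
  (∀ e f, e ≠ st → f ≠ st → e ≠ f → lt e f ∨ lt f e) ∧
  (∀ e, e ≠ st → s ∉ ends e → ∃ f, Neighbors ends e f ∧ lt f e) ∧
  (∀ e, e ≠ st → t ∉ ends e → ∃ f, Neighbors ends e f ∧ lt e f)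

/-- An ear: a subgraph given as the vertex sequence and edge sequence of a
walk (a path, or a cycle when the first and last vertices coincide). -/
structure Ear (V E : Type) where
  verts : List V
  edges : List E

/-- An ear decomposition `(P₀, …, P_len)` of the multigraph given by `ends`:
a sequence of ears partitioning the edge set, where `P₀` is a cycle that is
not a self-loop, and each later ear is either a path intersecting the union
of the previous ears exactly in its two endpoints, or a cycle intersecting it
in a unique vertex. -/
structure EarDecomposition (ends : E → Sym2 V) where
  len : ℕ
  ears : Fin (len + 1) → Ear V E
  /-- every ear is a walk in the graph -/
  walk : ∀ i, IsWalkSeq ends (ears i).verts (ears i).edges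
  /-- no ear repeats an edge -/
  edges_nodup : ∀ i, (ears i).edges.Nodup
  /-- the ears partition the edge set -/
  partition : ∀ e : E, ∃! i, e ∈ (ears i).edges
  /-- the ears cover all vertices (their union is the whole graph) -/
  covers : ∀ v : V, ∃ i, v ∈ (ears i).verts
  /-- every ear contains at least one edge -/
  ear_nonempty : ∀ i, (ears i).edges ≠ []
  /-- `P₀` is a cycle … -/
  first_closed : (ears 0).verts.head? = (ears 0).verts.getLast?
  first_nodup : (ears 0).verts.tail.Nodup
  /-- … that is not a self-loop -/
  first_not_loop : 2 ≤ (ears 0).edges.length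
  /-- every later ear is a path (distinct vertices) or a cycle (closed, with
  distinct vertices except for the repeated endpoint) -/
  ear_path_or_cycle : ∀ i : Fin (len + 1), 0 < (i : ℕ) →
    (ears i).verts.Nodup ∨
      ((ears i).verts.head? = (ears i).verts.getLast? ∧ (ears i).verts.tail.Nodup)
  /-- the endpoint(s) of a later ear lie in the union of the previous ears -/
  ear_endpoints : ∀ i : Fin (len + 1), 0 < (i : ℕ) → ∀ x : V,
    ((ears i).verts.head? = some x ∨ (ears i).verts.getLast? = some x) →
      ∃ j, j < i ∧ x ∈ (ears j).verts
  /-- the inner vertices of a later ear avoid all previous ears -/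
  ear_inner_new : ∀ i : Fin (len + 1), 0 < (i : ℕ) →
    ∀ x ∈ (ears i).verts.tail.dropLast, ∀ j, j < i → x ∉ (ears j).verts

variable {ends : E → Sym2 V}

/-- The vertex set of `G_{i-1} = P₀ ∪ ⋯ ∪ P_{i-1}`. -/
def EarDecomposition.prevVerts (D : EarDecomposition ends) (i : Fin (D.len + 1)) : Set V :=
  {x | ∃ j, j < i ∧ x ∈ (D.ears j).verts}

/-- `inner(P_i)`, the set of inner vertices of the `i`-th ear. -/
def EarDecomposition.innerVerts (D : EarDecomposition ends) (i : Fin (D.len + 1)) : Set V :=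
  {x | x ∈ (D.ears i).verts ∧ x ∉ D.prevVerts i}

/-- The edge set `E - E_i` of `\overline{G_i}`. -/
def EarDecomposition.remEdges (D : EarDecomposition ends) (i : Fin (D.len + 1)) : Set E :=
  {e | ∃ j, i < j ∧ e ∈ (D.ears j).edges}

/-- `birth(e)`: the index of the unique ear containing the edge `e`. -/
noncomputable def EarDecomposition.birthE (D : EarDecomposition ends) (e : E) :
    Fin (D.len + 1) := (D.partition e).exists.choose

open Classical in
/-- `last(v)`: the maximal index `birth(vw)` over all edges `vw` incident to `v`. -/
noncomputable def EarDecomposition.lastV [Fintype E] (D : EarDecomposition ends) (v : V) : ℕ :=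
  (Finset.univ.filter fun e => v ∈ ends e).sup fun e => (D.birthE e : ℕ)

/-- The vertices of the subgraph induced by the edge set `S`. -/
def coverVerts (ends : E → Sym2 V) (S : Set E) : Set V :=
  {v | ∃ e ∈ S, v ∈ ends e}

/-- The subgraph induced by the edge set `S` is connected. -/
def ConnectedOn (ends : E → Sym2 V) (S : Set E) : Prop :=
  ∀ u ∈ coverVerts ends S, ∀ v ∈ coverVerts ends S, HasWalk ends S u v

/-- Definition 4.1: `D` is a (2,1)-edge-order through `rt` avoiding `ru`:
(1) `rt ∈ P₀`; (2) the last ear is the short ear `ru`; (3) non-separateness: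
for every `i < m - n`, `\overline{G_i}` contains all inner vertices of `P_i`
and, if `P_i` is short, at least one endpoint of `P_i`. -/
def IsTwoOneEdgeOrder (D : EarDecomposition ends) (rt ru : E) : Prop :=
  rt ∈ (D.ears 0).edges ∧
  (D.ears (Fin.last D.len)).edges = [ru] ∧
  ∀ i : Fin (D.len + 1), (i : ℕ) < D.len →
    (∀ x ∈ D.innerVerts i, x ∈ coverVerts ends (D.remEdges i)) ∧
    ((D.ears i).edges.length = 1 →
      ∃ x, ((D.ears i).verts.head? = some x ∨ (D.ears i).verts.getLast? = some x) ∧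
        x ∈ coverVerts ends (D.remEdges i))

open Classical in
/-- The degree of a vertex in a multigraph; self-loops count twice. -/
noncomputable def degree [Fintype E] (ends : E → Sym2 V) (v : V) : ℕ :=
  ∑ e : E, (if ends e = s(v, v) then 2 else if v ∈ ends e then 1 else 0)

/-- `T` is the edge set of a tree on the vertex set `W`: all its edges join
vertices of `W`, it connects any two vertices of `W`, and it contains no
nonempty closed trail (i.e. no cycle). -/
def IsTreeOn (ends : E → Sym2 V) (W : Set V) (T : Set E) : Prop :=
  (∀ e ∈ T, ∀ x, x ∈ ends e → x ∈ W) ∧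
  (∀ u ∈ W, ∀ v ∈ W, HasWalk ends T u v) ∧
  (∀ vs es, IsWalkSeq ends vs es → (∀ e ∈ es, e ∈ T) → es.Nodup →
    vs.head? = vs.getLast? → es = [])

/-- `T` is the edge set of a spanning tree of the whole multigraph. -/
def IsSpanningTree (ends : E → Sym2 V) (T : Set E) : Prop :=
  IsTreeOn ends Set.univ T

/-- `(vs, es)` is a (simple) path from `x` to `r` using only edges of `T`. -/
def IsPathIn (ends : E → Sym2 V) (T : Set E) (x r : V)
    (vs : List V) (es : List E) : Prop :=
  IsWalkSeq ends vs es ∧ vs.Nodup ∧ vs.head? = some x ∧ vs.getLast? = some r ∧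
    ∀ e ∈ es, e ∈ T

/-- The paths from `x` to the common root `r` inside `T₁` and inside `T₂` are
edge-disjoint. -/
def EdgeIndepFrom (ends : E → Sym2 V) (T₁ T₂ : Set E) (r x : V) : Prop :=
  ∀ vs₁ es₁ vs₂ es₂, IsPathIn ends T₁ x r vs₁ es₁ → IsPathIn ends T₂ x r vs₂ es₂ →
    ∀ e ∈ es₁, e ∉ es₂


section Aux
variable {ends : E → Sym2 V}

lemma walk_length {vs es} (h : IsWalkSeq ends vs es) : vs.length = es.length + 1 := by
  induction h <;> simp [*]

lemma walk_nth {vs es} (h : IsWalkSeq ends vs es) (dV : V) (dE : E) :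
    ∀ i < es.length, ends (es.getD i dE) = s(vs.getD i dV, vs.getD (i+1) dV) := by
  induction h with
  | nil v => simp
  | cons he hw ih =>
    intro i hi
    cases i with
    | zero => simpa using he
    | succ n =>
      simp only [List.getD_cons_succ]
      exact ih n (by simpa using hi)

lemma walk_of_nth (dV : V) (dE : E) {vs : List V} {es : List E}
    (hlen : vs.length = es.length + 1)
    (h : ∀ i < es.length, ends (es.getD i dE) = s(vs.getD i dV, vs.getD (i+1) dV)) :
    IsWalkSeq ends vs es := by
  induction es generalizing vs with
  | nil =>
    match vs, hlen with
    | [v], _ => exact .nil v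
  | cons e es ih =>
    match vs, hlen with
    | u :: v :: vs, hlen =>
      refine .cons ?_ (ih (by simpa using hlen) ?_)
      · simpa using h 0 (by simp)
      · intro i hi
        simpa using h (i+1) (by simpa using hi)

lemma head?_getD (d : V) {l : List V} (h : l ≠ []) : l.head? = some (l.getD 0 d) := by
  cases l with
  | nil => simp at h
  | cons a l => simp

lemma getLast?_getD (d : V) {l : List V} (h : l ≠ []) :
    l.getLast? = some (l.getD (l.length - 1) d) := by
  rw [List.getLast?_eq_getLast h, List.getLast_eq_getElem, List.getD_eq_getElem]

lemma getD_mem {α : Type} (d : α) {l : List α} {i : ℕ} (h : i < l.length) :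
    l.getD i d ∈ l := by
  rw [List.getD_eq_getElem _ _ h]; exact List.getElem_mem _

lemma mem_iff_getD {α : Type} (d : α) {l : List α} {x : α} :
    x ∈ l ↔ ∃ i < l.length, l.getD i d = x := by
  constructor
  · intro hx
    obtain ⟨i, hi, rfl⟩ := List.mem_iff_getElem.1 hx
    exact ⟨i, hi, (List.getD_eq_getElem _ _ hi)⟩
  · rintro ⟨i, hi, rfl⟩
    exact getD_mem d hi

lemma getD_take {α : Type} (d : α) {l : List α} {i n : ℕ} (hi : i < n) (hl : i < l.length) :
    (l.take n).getD i d = l.getD i d := by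
  rw [List.getD_eq_getElem _ _ (by simpa using ⟨hi, hl⟩), List.getD_eq_getElem _ _ hl]
  exact List.getElem_take

lemma getD_drop {α : Type} (d : α) {l : List α} {i n : ℕ} (h : n + i < l.length) :
    (l.drop n).getD i d = l.getD (n + i) d := by
  rw [List.getD_eq_getElem _ _ (by simp; omega), List.getD_eq_getElem _ _ h]
  simp [List.getElem_drop]

lemma getD_reverse {α : Type} (d : α) {l : List α} {i : ℕ} (h : i < l.length) :
    l.reverse.getD i d = l.getD (l.length - 1 - i) d := by
  rw [List.getD_eq_getElem _ _ (by simpa using h), List.getD_eq_getElem _ _ (by omega)]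
  simp [List.getElem_reverse]

lemma nodup_getD_ne {α : Type} (d : α) {l : List α} (hnd : l.Nodup) {i j : ℕ}
    (hi : i < l.length) (hj : j < l.length) (hij : i ≠ j) :
    l.getD i d ≠ l.getD j d := by
  rw [List.getD_eq_getElem _ _ hi, List.getD_eq_getElem _ _ hj]
  intro hcon
  exact hij (List.Nodup.getElem_inj_iff hnd |>.1 hcon)

lemma walk_take {vs es} (h : IsWalkSeq ends vs es) (dV : V) (dE : E) {j : ℕ}
    (hj : j < vs.length) : IsWalkSeq ends (vs.take (j+1)) (es.take j) := by
  have hlen := walk_length h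
  apply walk_of_nth dV dE
  · simp; omega
  · intro i hi
    simp at hi
    rw [getD_take dV (by omega) (by omega), getD_take dV (by omega) (by omega),
      getD_take dE (by omega) (by omega)]
    exact walk_nth h dV dE i (by omega)

lemma walk_drop {vs es} (h : IsWalkSeq ends vs es) (dV : V) (dE : E) {j : ℕ}
    (hj : j < vs.length) : IsWalkSeq ends (vs.drop j) (es.drop j) := by
  have hlen := walk_length h
  apply walk_of_nth dV dE
  · simp; omega
  · intro i hi
    simp at hi
    rw [getD_drop dV (by omega), getD_drop dV (by omega), getD_drop dE (by omega)]
    have : j + (i+1) = j + i + 1 := by omega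
    rw [this]
    exact walk_nth h dV dE (j+i) (by omega)

lemma walk_reverse {vs es} (h : IsWalkSeq ends vs es) (dV : V) (dE : E) :
    IsWalkSeq ends vs.reverse es.reverse := by
  have hlen := walk_length h
  apply walk_of_nth dV dE
  · simp; omega
  · intro i hi
    simp at hi
    rw [getD_reverse dE (by omega), getD_reverse dV (by omega), getD_reverse dV (by omega)]
    have h1 : vs.length - 1 - i = (es.length - 1 - i) + 1 := by omega
    have h2 : vs.length - 1 - (i+1) = es.length - 1 - i := by omega
    rw [h1, h2, walk_nth h dV dE (es.length - 1 - i) (by omega)]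
    exact Sym2.eq_swap

end Aux


section Aux2
variable {ends : E → Sym2 V}

lemma walk_vs_ne_nil {vs es} (h : IsWalkSeq ends vs es) : vs ≠ [] := by
  have := walk_length h
  intro hcon; rw [hcon] at this; simp at this

lemma walk_endpoint_mem {vs es} (h : IsWalkSeq ends vs es) (dV : V) (dE : E) {e : E}
    (he : e ∈ es) {x : V} (hx : x ∈ ends e) : x ∈ vs := by
  have hlen := walk_length h
  obtain ⟨i, hi, rfl⟩ := (mem_iff_getD dE).1 he
  rw [walk_nth h dV dE i hi, Sym2.mem_iff] at hx
  rcases hx with rfl | rfl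
  · exact getD_mem dV (by omega)
  · exact getD_mem dV (by omega)

lemma walk_es_nodup {vs es} (h : IsWalkSeq ends vs es) (hnd : vs.Nodup) : es.Nodup := by
  induction h with
  | nil v => simp
  | cons he hw ih =>
    rename_i u v vs e es
    rw [List.nodup_cons] at hnd
    rw [List.nodup_cons]
    refine ⟨fun hcon => hnd.1 ?_, ih hnd.2⟩
    exact walk_endpoint_mem hw v e hcon (by rw [he]; simp)

lemma neighbors_consec {vs es} (h : IsWalkSeq ends vs es) (dV : V) (dE : E) {i : ℕ}
    (hi : i + 1 < es.length) :
    Neighbors ends (es.getD i dE) (es.getD (i+1) dE) := by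
  refine ⟨vs.getD (i+1) dV, ?_, ?_⟩
  · rw [walk_nth h dV dE i (by omega)]; simp
  · rw [walk_nth h dV dE (i+1) hi]; simp

lemma two_edges_at_mid {vs es} (h : IsWalkSeq ends vs es) (dV : V) (dE : E)
    (hnd : es.Nodup) {x : V} (hx : ∃ e ∈ es, x ∈ ends e)
    (hxu : x ≠ vs.getD 0 dV) (hxw : x ≠ vs.getD (vs.length - 1) dV) :
    ∃ e ∈ es, ∃ f ∈ es, e ≠ f ∧ x ∈ ends e ∧ x ∈ ends f := by
  have hlen := walk_length h
  obtain ⟨e, he, hxe⟩ := hx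
  obtain ⟨i, hi, rfl⟩ := (mem_iff_getD dE).1 he
  have hxi := hxe
  rw [walk_nth h dV dE i hi, Sym2.mem_iff] at hxi
  rcases hxi with hxi | hxi
  · have hi0 : i ≠ 0 := by rintro rfl; exact hxu hxi
    refine ⟨es.getD (i-1) dE, getD_mem dE (by omega), es.getD i dE, he,
      nodup_getD_ne dE hnd (by omega) hi (by omega), ?_, hxe⟩
    rw [walk_nth h dV dE (i-1) (by omega)]
    have heq : i - 1 + 1 = i := by omega
    rw [heq, ← hxi, Sym2.mem_iff]
    right; rfl
  · have hi1 : i + 1 ≠ es.length := by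
      intro hcon
      apply hxw
      rw [hxi, hcon]; congr 1; omega
    refine ⟨es.getD i dE, he, es.getD (i+1) dE, getD_mem dE (by omega),
      nodup_getD_ne dE hnd hi (by omega) (by omega), hxe, ?_⟩
    rw [walk_nth h dV dE (i+1) (by omega), ← hxi, Sym2.mem_iff]
    left; rfl

lemma walk_to_path {vs es} (h : IsWalkSeq ends vs es) (dV : V) (dE : E) :
    ∃ vs' es', IsWalkSeq ends vs' es' ∧ vs'.Nodup ∧ vs'.head? = vs.head? ∧
      vs'.getLast? = vs.getLast? ∧ (∀ e ∈ es', e ∈ es) ∧ (∀ x ∈ vs', x ∈ vs) := by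
  induction h with
  | nil v => exact ⟨[v], [], .nil v, by simp, rfl, rfl, by simp, by simp⟩
  | cons he hw ih =>
    rename_i u v vs e es
    obtain ⟨p, q, hpw, hpnd, hph, hpl, hqsub, hpsub⟩ := ih
    have hpne : p ≠ [] := walk_vs_ne_nil hpw
    by_cases hu : u ∈ p
    · obtain ⟨i, hi, hpi⟩ := (mem_iff_getD dV).1 hu
      have hplen := walk_length hpw
      refine ⟨p.drop i, q.drop i, walk_drop hpw dV dE hi,
        hpnd.sublist (List.drop_sublist i p), ?_, ?_, ?_, ?_⟩
      · rw [head?_getD dV (by simp; omega), getD_drop dV (by omega)]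
        show some (p.getD i dV) = some u
        rw [hpi]
      · have h1 : (p.drop i).getLast? = some ((p.drop i).getD ((p.drop i).length - 1) dV) :=
          getLast?_getD dV (by simp; omega)
        have h2 : (p.drop i).getD ((p.drop i).length - 1) dV
            = p.getD (i + ((p.drop i).length - 1)) dV := getD_drop dV (by simp; omega)
        have h3 : i + ((p.drop i).length - 1) = p.length - 1 := by simp; omega
        rw [h1, h2, h3, ← getLast?_getD dV hpne, hpl, List.getLast?_cons_cons]
      · intro f hf
        simp only [List.mem_cons]
        right
        exact hqsub f (List.mem_of_mem_drop hf)
      · intro x hx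
        simp only [List.mem_cons]
        have := hpsub x (List.mem_of_mem_drop hx)
        simp only [List.mem_cons] at this
        tauto
    · obtain ⟨p', rfl⟩ : ∃ p', p = v :: p' := by
        cases p with
        | nil => simp at hpne
        | cons a p' =>
          simp only [List.head?_cons] at hph
          cases hph; exact ⟨p', rfl⟩
      refine ⟨u :: v :: p', e :: q, .cons he hpw, by simp [hpnd, hu], by simp, ?_, ?_, ?_⟩
      · rw [List.getLast?_cons_cons, List.getLast?_cons_cons]
        exact hpl
      · intro f hf
        have hf' : f = e ∨ f ∈ q := by simpa using hf
        rcases hf' with rfl | hf'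
        · simp
        · simp [hqsub f hf']
      · intro x hx
        have hx' : x = u ∨ x ∈ v :: p' := by simpa using hx
        rcases hx' with rfl | hx'
        · simp
        · have := hpsub x hx'
          simp only [List.mem_cons] at this ⊢
          tauto

end Aux2

section Rat

lemma exists_incr (X : Finset ℚ) (b : ℚ) : ∀ (r : ℕ) (a : ℚ), a < b →
    ∃ qs : List ℚ, qs.length = r ∧ qs.Pairwise (· < ·) ∧
      ∀ q ∈ qs, a < q ∧ q < b ∧ q ∉ X := by
  intro r
  induction r with
  | zero => exact fun a _ => ⟨[], rfl, by simp, by simp⟩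
  | succ n ih =>
    intro a hab
    obtain ⟨q, hq, hqX⟩ := (Set.Ioo_infinite hab).exists_notMem_finset X
    obtain ⟨qs, hl, hp, hmem⟩ := ih q hq.2
    refine ⟨q :: qs, by simp [hl], ?_, ?_⟩
    · rw [List.pairwise_cons]
      exact ⟨fun p hp' => (hmem p hp').1, hp⟩
    · intro p hp'
      rcases List.mem_cons.1 hp' with rfl | hp'
      · exact ⟨hq.1, hq.2, hqX⟩
      · obtain ⟨h1, h2, h3⟩ := hmem p hp'
        exact ⟨lt_trans hq.1 h1, h2, h3⟩

end Rat

section Ins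

variable {ends : E → Sym2 V} {s t : V} {st : E}

/-- The invariant for the growing partial edge order. -/
def Inv (ends : E → Sym2 V) (s t : V) (st : E) (S : Finset E) (ρ : E → ℚ) : Prop :=
  st ∉ S ∧
  s ∈ coverVerts ends ↑S ∧ t ∈ coverVerts ends ↑S ∧
  (∀ e ∈ S, ∀ f ∈ S, ρ e = ρ f → e = f) ∧
  (∀ v ∈ coverVerts ends (↑S : Set E), v ≠ s → v ≠ t →
    ∃ e ∈ S, ∃ f ∈ S, e ≠ f ∧ v ∈ ends e ∧ v ∈ ends f) ∧
  (∀ e ∈ S, s ∉ ends e → ∃ f ∈ S, Neighbors ends e f ∧ ρ f < ρ e) ∧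
  (∀ e ∈ S, t ∉ ends e → ∃ f ∈ S, Neighbors ends e f ∧ ρ e < ρ f)

lemma insert_ear [DecidableEq E] {S : Finset E} {ρ : E → ℚ}
    (hInv : Inv ends s t st S ρ)
    {vs es} (hw : IsWalkSeq ends vs es) (hne : es ≠ [])
    (hnd : es.Nodup) (hes : ∀ e ∈ es, e ∉ S ∧ e ≠ st)
    (hucov : vs.getD 0 s ∈ coverVerts ends ↑S)
    (hwcov : vs.getD (vs.length - 1) s ∈ coverVerts ends ↑S)
    {a b : ℚ} (hab : a < b)
    (hfirst : s ∈ ends (es.getD 0 st) ∨ ∃ g ∈ S, vs.getD 0 s ∈ ends g ∧ ρ g ≤ a)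
    (hlast : t ∈ ends (es.getD (es.length - 1) st) ∨
      ∃ h ∈ S, vs.getD (vs.length - 1) s ∈ ends h ∧ b ≤ ρ h) :
    ∃ ρ' : E → ℚ, Inv ends s t st (S ∪ es.toFinset) ρ' := by
  obtain ⟨hst, hscov, htcov, hinj, hcov2, hearl, hlate⟩ := hInv
  have hlen := walk_length hw
  have hlpos : 0 < es.length := List.length_pos_iff.2 hne
  obtain ⟨qs, hql, hqp, hqmem⟩ := exists_incr (S.image ρ) b es.length a hab
  set ρ' : E → ℚ := fun e => if e ∈ es then qs.getD (es.idxOf e) 0 else ρ e with hρ'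
  have hρS : ∀ e ∈ S, ρ' e = ρ e := by
    intro e he
    have : e ∉ es := fun hc => (hes e hc).1 he
    simp [hρ', this]
  have hρes : ∀ i, (hi : i < es.length) → ρ' (es.getD i st) = qs.getD i 0 := by
    intro i hi
    have hmem : es.getD i st ∈ es := getD_mem st hi
    rw [List.getD_eq_getElem _ _ hi]
    simp only [hρ', List.getElem_mem, if_pos]
    rw [List.Nodup.idxOf_getElem hnd i hi]
  have hqD : ∀ i, i < es.length → a < qs.getD i 0 ∧ qs.getD i 0 < b ∧
      qs.getD i 0 ∉ S.image ρ := fun i hi => hqmem _ (getD_mem 0 (by omega))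
  have hqmono : ∀ i j, i < j → j < es.length → qs.getD i 0 < qs.getD j 0 := by
    intro i j hij hj
    rw [List.getD_eq_getElem _ _ (by omega), List.getD_eq_getElem _ _ (by omega)]
    exact List.pairwise_iff_getElem.1 hqp i j (by omega) (by omega) hij
  have hρSimage : ∀ e ∈ S, ρ' e ∈ S.image ρ := by
    intro e he
    rw [hρS e he]
    exact Finset.mem_image_of_mem ρ he
  have hmemU : ∀ e ∈ es, e ∈ S ∪ es.toFinset := by
    intro e he; simp [he]
  have hSU : ∀ e ∈ S, e ∈ S ∪ es.toFinset := by intro e he; simp [he]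
  have hcovU : ∀ x ∈ coverVerts ends (↑S : Set E),
      x ∈ coverVerts ends (↑(S ∪ es.toFinset) : Set E) := by
    rintro x ⟨e, he, hxe⟩
    exact ⟨e, by simp [Finset.mem_coe.1 he], hxe⟩
  have hidx : ∀ e ∈ es, ∃ i, i < es.length ∧ es.getD i st = e := by
    intro e he
    exact ⟨es.idxOf e, List.idxOf_lt_length_iff.2 he, by
      rw [List.getD_eq_getElem _ _ (List.idxOf_lt_length_iff.2 he)]
      exact List.getElem_idxOf _⟩
  refine ⟨ρ', ?_, hcovU _ hscov, hcovU _ htcov, ?_, ?_, ?_, ?_⟩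
  · simp only [Finset.mem_union, List.mem_toFinset]
    rintro (h | h)
    · exact hst h
    · exact (hes st h).2 rfl
  · -- injectivity
    intro e he f hf heq
    simp only [Finset.mem_union, List.mem_toFinset] at he hf
    rcases he with he | he <;> rcases hf with hf | hf
    · exact hinj e he f hf (by rwa [hρS e he, hρS f hf] at heq)
    · exfalso
      obtain ⟨j, hj, rfl⟩ := hidx f hf
      rw [hρes j hj] at heq
      exact (hqD j hj).2.2 (heq ▸ hρSimage e he)
    · exfalso
      obtain ⟨i, hi, rfl⟩ := hidx e he
      rw [hρes i hi] at heq
      exact (hqD i hi).2.2 (heq ▸ hρSimage f hf)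
    · obtain ⟨i, hi, rfl⟩ := hidx e he
      obtain ⟨j, hj, rfl⟩ := hidx f hf
      rw [hρes i hi, hρes j hj] at heq
      rcases lt_trichotomy i j with h | h | h
      · exact absurd heq (ne_of_lt (hqmono i j h hj))
      · rw [h]
      · exact absurd heq.symm (ne_of_lt (hqmono j i h hi))
  · -- coverage-2
    intro v hv hvs hvt
    by_cases hvc : v ∈ coverVerts ends (↑S : Set E)
    · obtain ⟨e, he, f, hf, hef, h1, h2⟩ := hcov2 v hvc hvs hvt
      exact ⟨e, hSU e he, f, hSU f hf, hef, h1, h2⟩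
    · obtain ⟨e, he, hve⟩ := hv
      simp only [Finset.coe_union, Set.mem_union, Finset.mem_coe,
        List.coe_toFinset, Set.mem_setOf_eq] at he
      rcases he with he | he
      · exact absurd ⟨e, he, hve⟩ hvc
      · have hvu : v ≠ vs.getD 0 s := fun hc => hvc (hc ▸ hucov)
        have hvw : v ≠ vs.getD (vs.length - 1) s := fun hc => hvc (hc ▸ hwcov)
        obtain ⟨e', he', f', hf', hef, h1, h2⟩ :=
          two_edges_at_mid hw s st hnd ⟨e, he, hve⟩ hvu hvw
        exact ⟨e', hmemU e' he', f', hmemU f' hf', hef, h1, h2⟩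
  · -- earlier neighbor
    intro e he hse
    simp only [Finset.mem_union, List.mem_toFinset] at he
    rcases he with he | he
    · obtain ⟨f, hf, hnb, hlt⟩ := hearl e he hse
      exact ⟨f, hSU f hf, hnb, by rwa [hρS e he, hρS f hf]⟩
    · obtain ⟨i, hi, rfl⟩ := hidx e he
      rcases Nat.eq_zero_or_pos i with rfl | hipos
      · rcases hfirst with hfirst | ⟨g, hg, hgu, hga⟩
        · exact absurd hfirst hse
        · refine ⟨g, hSU g hg, ⟨vs.getD 0 s, ?_, hgu⟩, ?_⟩
          · rw [walk_nth hw s st 0 hi]; simp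
          · rw [hρS g hg, hρes 0 hi]
            exact lt_of_le_of_lt hga (hqD 0 hi).1
      · refine ⟨es.getD (i-1) st, hmemU _ (getD_mem st (by omega)), ?_, ?_⟩
        · obtain ⟨x, hx1, hx2⟩ := neighbors_consec hw s st
            (show (i-1) + 1 < es.length by omega)
          have hii : i - 1 + 1 = i := by omega
          rw [hii] at hx2
          exact ⟨x, hx2, hx1⟩
        · rw [hρes (i-1) (by omega), hρes i hi]
          exact hqmono (i-1) i (by omega) hi
  · -- later neighbor
    intro e he hte
    simp only [Finset.mem_union, List.mem_toFinset] at he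
    rcases he with he | he
    · obtain ⟨f, hf, hnb, hlt⟩ := hlate e he hte
      exact ⟨f, hSU f hf, hnb, by rwa [hρS e he, hρS f hf]⟩
    · obtain ⟨i, hi, rfl⟩ := hidx e he
      rcases Nat.lt_or_ge (i+1) es.length with hilt | hige
      · refine ⟨es.getD (i+1) st, hmemU _ (getD_mem st hilt),
          neighbors_consec hw s st hilt, ?_⟩
        rw [hρes (i+1) hilt, hρes i hi]
        exact hqmono i (i+1) (by omega) hilt
      · have hieq : i = es.length - 1 := by omega
        subst hieq
        rcases hlast with hlast | ⟨g, hg, hgw, hgb⟩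
        · exact absurd hlast hte
        · refine ⟨g, hSU g hg, ⟨vs.getD (vs.length - 1) s, ?_, hgw⟩, ?_⟩
          · rw [walk_nth hw s st (es.length - 1) hi]
            have : es.length - 1 + 1 = vs.length - 1 := by omega
            rw [this]
            simp
          · rw [hρS g hg, hρes (es.length - 1) hi]
            exact lt_of_lt_of_le (hqD (es.length - 1) hi).2.1 hgb

end Ins

section Main

variable {ends : E → Sym2 V} {s t : V} {st : E}

lemma mem_take_getD {α : Type} (d : α) {l : List α} {j : ℕ} {x : α}
    (hx : x ∈ l.take (j+1)) : ∃ i, i ≤ j ∧ i < l.length ∧ l.getD i d = x := by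
  obtain ⟨i, hi, hgi⟩ := (mem_iff_getD d).1 hx
  simp only [List.length_take, lt_min_iff] at hi
  exact ⟨i, by omega, by omega, by
    rw [← getD_take d (show i < j + 1 by omega) (by omega)]; exact hgi⟩

lemma getD_zero_of_head? {α : Type} (d : α) {l : List α} {x : α}
    (h : l.head? = some x) : l.getD 0 d = x := by
  cases l with
  | nil => simp at h
  | cons a l =>
    rw [List.head?_cons] at h
    exact Option.some.inj h

lemma getD_last_of_getLast? {α : Type} (d : α) {l : List α} {x : α}
    (h : l.getLast? = some x) : l.getD (l.length - 1) d = x := by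
  have hne : l ≠ [] := by rintro rfl; simp at h
  rw [getLast?_getD d hne] at h
  exact Option.some.inj h

/-- Build a "simple" s-t path avoiding `st`, for the initial invariant. -/
lemma init [Fintype V] [Fintype E] [DecidableEq E]
    (hEC : EdgeConnected ends 2) (hst : ends st = s(s, t)) (hloop : s ≠ t) :
    ∃ (S : Finset E) (ρ : E → ℚ), Inv ends s t st S ρ := by
  obtain ⟨vs0, es0, hw0, hh0, hl0, hsub0⟩ := hEC.2 {st} (by simp) s t
  obtain ⟨vs, es, hw, hnd, hh, hl, hessub, _⟩ := walk_to_path hw0 s st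
  rw [hh0] at hh
  rw [hl0] at hl
  have hndes : es.Nodup := walk_es_nodup hw hnd
  have hlen := walk_length hw
  have hne : es ≠ [] := by
    rintro rfl
    obtain ⟨x, rfl⟩ : ∃ x, vs = [x] := by
      match vs, hlen with | [x], _ => exact ⟨x, rfl⟩
    simp at hh hl
    exact hloop (hh.symm.trans hl)
  have hlpos : 0 < es.length := List.length_pos_iff.2 hne
  have hnst : ∀ e ∈ es, e ≠ st := by
    intro e he
    have := hsub0 e (hessub e he)
    simpa using this
  have hh' : vs.getD 0 s = s := getD_zero_of_head? s hh
  have hl' : vs.getD (vs.length - 1) s = t := getD_last_of_getLast? s hl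
  have hidx : ∀ e ∈ es, ∃ i, i < es.length ∧ es.getD i st = e := by
    intro e he
    exact ⟨es.idxOf e, List.idxOf_lt_length_iff.2 he, by
      rw [List.getD_eq_getElem _ _ (List.idxOf_lt_length_iff.2 he)]
      exact List.getElem_idxOf _⟩
  have hρ : ∀ i, i < es.length → (fun e => (es.idxOf e : ℚ)) (es.getD i st) = i := by
    intro i hi
    simp only
    rw [List.getD_eq_getElem _ _ hi, List.Nodup.idxOf_getElem hndes i hi]
  refine ⟨es.toFinset, fun e => (es.idxOf e : ℚ), ?_, ?_, ?_, ?_, ?_, ?_, ?_⟩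
  · simp only [List.mem_toFinset]
    intro hcon
    exact hnst st hcon rfl
  · refine ⟨es.getD 0 st, Finset.mem_coe.2 (List.mem_toFinset.2 (getD_mem st hlpos)), ?_⟩
    rw [walk_nth hw s st 0 hlpos]
    exact Sym2.mem_iff.2 (Or.inl hh'.symm)
  · refine ⟨es.getD (es.length - 1) st, Finset.mem_coe.2 (List.mem_toFinset.2 (getD_mem st (by omega))), ?_⟩
    rw [walk_nth hw s st (es.length - 1) (by omega)]
    have heq1 : es.length - 1 + 1 = vs.length - 1 := by omega
    rw [heq1]
    exact Sym2.mem_iff.2 (Or.inr hl'.symm)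
  · intro e he f hf heq
    simp only [List.mem_toFinset] at he hf
    simp only at heq
    have he' := List.idxOf_lt_length_iff.2 he
    have hf' := List.idxOf_lt_length_iff.2 hf
    have : es.idxOf e = es.idxOf f := by exact_mod_cast heq
    rw [← List.getElem_idxOf he', ← List.getElem_idxOf hf']
    simp [this]
  · intro v hv hvs hvt
    obtain ⟨e, he, hve⟩ := hv
    simp only [Finset.mem_coe, List.mem_toFinset] at he
    have h2e := two_edges_at_mid hw s st hndes ⟨e, he, hve⟩
      (by rw [hh']; exact hvs) (by rw [hl']; exact hvt)
    obtain ⟨e', he', f', hf', hef, h1, h2⟩ := h2e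
    exact ⟨e', by simpa using he', f', by simpa using hf', hef, h1, h2⟩
  · intro e he hse
    simp only [List.mem_toFinset] at he
    obtain ⟨i, hi, rfl⟩ := hidx e he
    rcases Nat.eq_zero_or_pos i with rfl | hipos
    · exfalso
      apply hse
      rw [walk_nth hw s st 0 hlpos]
      exact Sym2.mem_iff.2 (Or.inl hh'.symm)
    · refine ⟨es.getD (i-1) st, List.mem_toFinset.2 (getD_mem st (show i - 1 < es.length by omega)),
        ?_, ?_⟩
      · obtain ⟨x, hx1, hx2⟩ := neighbors_consec hw s st
          (show (i-1) + 1 < es.length by omega)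
        have hii : i - 1 + 1 = i := by omega
        rw [hii] at hx2
        exact ⟨x, hx2, hx1⟩
      · rw [hρ (i-1) (by omega), hρ i hi]
        exact_mod_cast (by omega : i - 1 < i)
  · intro e he hte
    simp only [List.mem_toFinset] at he
    obtain ⟨i, hi, rfl⟩ := hidx e he
    rcases Nat.lt_or_ge (i+1) es.length with hilt | hige
    · refine ⟨es.getD (i+1) st, List.mem_toFinset.2 (getD_mem st hilt),
        neighbors_consec hw s st hilt, ?_⟩
      rw [hρ (i+1) hilt, hρ i hi]
      exact_mod_cast (by omega : i < i + 1)
    · exfalso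
      apply hte
      have hieq : i = es.length - 1 := by omega
      subst hieq
      rw [walk_nth hw s st (es.length - 1) hi]
      have heq1 : es.length - 1 + 1 = vs.length - 1 := by omega
      rw [heq1]
      exact Sym2.mem_iff.2 (Or.inr hl'.symm)

end Main

section Step

variable {ends : E → Sym2 V} {s t : V} {st : E}

lemma walk_truncate {vs es} (h : IsWalkSeq ends vs es) (dV : V) (dE : E) (P : V → Prop)
    (hlast : P (vs.getD (vs.length - 1) dV)) (hhead : ¬ P (vs.getD 0 dV)) :
    ∃ j, 0 < j ∧ j < vs.length ∧ IsWalkSeq ends (vs.take (j+1)) (es.take j) ∧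
      (∀ i < j, ¬ P (vs.getD i dV)) ∧ P (vs.getD j dV) := by
  classical
  have hlen := walk_length h
  have hex : ∃ j, j < vs.length ∧ P (vs.getD j dV) := ⟨vs.length - 1, by omega, hlast⟩
  have hspec := Nat.find_spec hex
  refine ⟨Nat.find hex, ?_, hspec.1, walk_take h dV dE hspec.1, ?_, hspec.2⟩
  · exact Nat.pos_of_ne_zero (fun h0 => hhead (h0 ▸ hspec.2))
  · intro i hi hP
    exact Nat.find_min hex hi ⟨by omega, hP⟩

lemma find_attach [Fintype V] [Fintype E] (hEC : EdgeConnected ends 2)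
    (hst : ends st = s(s, t))
    {S : Finset E} {ρ : E → ℚ} (hInv : Inv ends s t st S ρ)
    {e' : E} (he'S : e' ∉ S) (he'st : e' ≠ st) :
    ∃ e0 u v, ends e0 = s(u, v) ∧ u ∈ coverVerts ends (↑S : Set E) ∧
      e0 ∉ S ∧ e0 ≠ st := by
  classical
  obtain ⟨x, y, hxy⟩ : ∃ x y, ends e' = s(x, y) :=
    Sym2.inductionOn (ends e') (fun x y => ⟨x, y, rfl⟩)
  have hSC : ∀ e ∈ S, ∀ z, z ∈ ends e → z ∈ coverVerts ends (↑S : Set E) :=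
    fun e he z hz => ⟨e, Finset.mem_coe.2 he, hz⟩
  have hsC : s ∈ coverVerts ends (↑S : Set E) := hInv.2.1
  have htC : t ∈ coverVerts ends (↑S : Set E) := hInv.2.2.1
  by_cases hx : x ∈ coverVerts ends (↑S : Set E)
  · exact ⟨e', x, y, hxy, hx, he'S, he'st⟩
  · obtain ⟨vs0, es0, hw0, hh0, hl0, -⟩ := hEC.2 ∅ (by simp) x s
    have hh0' : vs0.getD 0 s = x := getD_zero_of_head? s hh0
    have hl0' : vs0.getD (vs0.length - 1) s = s := getD_last_of_getLast? s hl0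
    obtain ⟨j, hj0, hjlt, hwt, hjmin, hjP⟩ := walk_truncate hw0 s st
      (· ∈ coverVerts ends (↑S : Set E))
      (by rw [hl0']; exact hsC) (by rw [hh0']; exact hx)
    have hlen0 := walk_length hw0
    have hmem : vs0.getD (j-1) s ∈ ends (es0.getD (j-1) st) := by
      rw [walk_nth hw0 s st (j-1) (by omega)]
      exact Sym2.mem_iff.2 (Or.inl rfl)
    refine ⟨es0.getD (j-1) st, vs0.getD j s, vs0.getD (j-1) s, ?_, hjP, ?_, ?_⟩
    · rw [walk_nth hw0 s st (j-1) (by omega)]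
      have hjj : j - 1 + 1 = j := by omega
      rw [hjj]
      exact Sym2.eq_swap
    · intro hcon
      exact (hjmin (j-1) (by omega)) (hSC _ hcon _ hmem)
    · intro hcon
      apply hjmin (j-1) (by omega)
      rw [hcon, hst] at hmem
      rcases Sym2.mem_iff.1 hmem with h | h
      · rw [h]; exact hsC
      · rw [h]; exact htC

lemma build_ear [Fintype V] [Fintype E] [DecidableEq E] (hEC : EdgeConnected ends 2)
    (hst : ends st = s(s, t))
    {S : Finset E} {ρ : E → ℚ} (hInv : Inv ends s t st S ρ)
    {e0 : E} {u v : V} (h0 : ends e0 = s(u, v))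
    (hu : u ∈ coverVerts ends (↑S : Set E)) (h0S : e0 ∉ S) (h0st : e0 ≠ st) :
    ∃ vsQ esQ, IsWalkSeq ends vsQ esQ ∧ esQ ≠ [] ∧ esQ.Nodup ∧
      (∀ e ∈ esQ, e ∉ S ∧ e ≠ st) ∧
      vsQ.getD 0 s ∈ coverVerts ends (↑S : Set E) ∧
      vsQ.getD (vsQ.length - 1) s ∈ coverVerts ends (↑S : Set E) ∧ e0 ∈ esQ := by
  classical
  have hSC : ∀ e ∈ S, ∀ z, z ∈ ends e → z ∈ coverVerts ends (↑S : Set E) :=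
    fun e he z hz => ⟨e, Finset.mem_coe.2 he, hz⟩
  have hsC : s ∈ coverVerts ends (↑S : Set E) := hInv.2.1
  have htC : t ∈ coverVerts ends (↑S : Set E) := hInv.2.2.1
  by_cases hv : v ∈ coverVerts ends (↑S : Set E)
  · refine ⟨[u, v], [e0], .cons h0 (.nil v), by simp, by simp, ?_,
      by simpa using hu, by simpa using hv, by simp⟩
    intro e he
    rw [List.mem_singleton] at he
    subst he
    exact ⟨h0S, h0st⟩
  · obtain ⟨vs1, es1, hw1, hh1, hl1, hsub1⟩ := hEC.2 {e0} (by simp) v u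
    have hh1' : vs1.getD 0 s = v := getD_zero_of_head? s hh1
    have hl1' : vs1.getD (vs1.length - 1) s = u := getD_last_of_getLast? s hl1
    obtain ⟨j, hj0, hjlt, hwt, hjmin, hjP⟩ := walk_truncate hw1 s st
      (· ∈ coverVerts ends (↑S : Set E))
      (by rw [hl1']; exact hu) (by rw [hh1']; exact hv)
    have hlen1 := walk_length hw1
    obtain ⟨p, q, hpw, hpnd, hph, hpl, hqsub, hpsub⟩ := walk_to_path hwt s st
    have htne : vs1.take (j+1) ≠ [] := by
      apply List.ne_nil_of_length_pos
      simp only [List.length_take]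
      omega
    have htake_h : (vs1.take (j+1)).head? = some v := by
      rw [head?_getD s htne, getD_take s (by omega) (by omega), hh1']
    have htake_l : (vs1.take (j+1)).getLast? = some (vs1.getD j s) := by
      have hlt : (vs1.take (j+1)).length = j + 1 := by simp; omega
      rw [getLast?_getD s htne, hlt]
      simp only [Nat.add_sub_cancel]
      exact congrArg some (getD_take s (by omega) (by omega))
    rw [htake_h] at hph
    rw [htake_l] at hpl
    have hpne := walk_vs_ne_nil hpw
    have hqnd := walk_es_nodup hpw hpnd
    have hplen := walk_length hpw
    have hph' : p.getD 0 s = v := getD_zero_of_head? s hph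
    have hpl' : p.getD (p.length - 1) s = vs1.getD j s := getD_last_of_getLast? s hpl
    have hpC : ∀ x ∈ p, x ∈ coverVerts ends (↑S : Set E) → x = vs1.getD j s := by
      intro x hx hxC
      obtain ⟨i, hij, hilt, hieq⟩ := mem_take_getD s (hpsub x hx)
      rcases Nat.lt_or_ge i j with h | h
      · exact absurd hxC (hieq ▸ hjmin i h)
      · have hij' : i = j := by omega
        rw [← hieq, hij']
    have hqS : ∀ e ∈ q, e ∉ S ∧ e ≠ st := by
      intro e he
      obtain ⟨i, hi, rfl⟩ := (mem_iff_getD st).1 he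
      have hxmem : p.getD i s ∈ ends (q.getD i st) := by
        rw [walk_nth hpw s st i hi]
        exact Sym2.mem_iff.2 (Or.inl rfl)
      have hxnC : p.getD i s ∉ coverVerts ends (↑S : Set E) := by
        intro hcon
        have heq1 := hpC _ (getD_mem s (by omega)) hcon
        have hne1 : p.getD i s ≠ p.getD (p.length - 1) s :=
          nodup_getD_ne s hpnd (by omega) (by omega) (by omega)
        exact hne1 (by rw [hpl']; exact heq1)
      constructor
      · intro hcon
        exact hxnC (hSC _ hcon _ hxmem)
      · intro hcon
        apply hxnC
        rw [hcon, hst] at hxmem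
        rcases Sym2.mem_iff.1 hxmem with h | h
        · rw [h]; exact hsC
        · rw [h]; exact htC
    have he0q : e0 ∉ q := by
      intro hcon
      have h1 := hsub1 e0 (List.mem_of_mem_take (hqsub e0 hcon))
      simp at h1
    obtain ⟨p', rfl⟩ : ∃ p', p = v :: p' := by
      cases p with
      | nil => simp at hpne
      | cons a p'' =>
        have : a = v := Option.some.inj (by simpa using hph)
        exact ⟨p'', by rw [this]⟩
    refine ⟨u :: v :: p', e0 :: q, .cons h0 hpw, by simp, ?_, ?_, ?_, ?_, by simp⟩
    · rw [List.nodup_cons]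
      exact ⟨he0q, hqnd⟩
    · intro e he
      rcases List.mem_cons.1 he with rfl | he
      · exact ⟨h0S, h0st⟩
      · exact hqS e he
    · simpa using hu
    · have h1 : (u :: v :: p').length - 1 = p'.length + 1 := by simp
      rw [h1, List.getD_cons_succ]
      have h2 : (v :: p').getD p'.length s = vs1.getD j s := by
        have h3 : (v :: p').length - 1 = p'.length := by simp
        rw [← h3, hpl']
      rw [h2]
      exact hjP

lemma step [Fintype V] [Fintype E] [DecidableEq E] (hEC : EdgeConnected ends 2)
    (hst : ends st = s(s, t))
    {S : Finset E} {ρ : E → ℚ} (hInv : Inv ends s t st S ρ)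
    {e' : E} (he'S : e' ∉ S) (he'st : e' ≠ st) :
    ∃ (S' : Finset E) (ρ' : E → ℚ), Inv ends s t st S' ρ' ∧ S ⊆ S' ∧
      ∃ e0, e0 ∈ S' ∧ e0 ∉ S := by
  classical
  obtain ⟨e0, u0, v0, h0, hu0, h0S, h0st⟩ := find_attach hEC hst hInv he'S he'st
  obtain ⟨vsQ, esQ, hwQ, hneQ, hndQ, hesQ, huC, hwC, he0Q⟩ :=
    build_ear hEC hst hInv h0 hu0 h0S h0st
  have main : ∀ (vs' : List V) (es' : List E), IsWalkSeq ends vs' es' → es' ≠ [] →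
      es'.Nodup → (∀ e ∈ es', e ∉ S ∧ e ≠ st) →
      vs'.getD 0 s ∈ coverVerts ends (↑S : Set E) →
      vs'.getD (vs'.length - 1) s ∈ coverVerts ends (↑S : Set E) →
      e0 ∈ es' →
      ∀ a b : ℚ, a < b →
      (s ∈ ends (es'.getD 0 st) ∨ ∃ g ∈ S, vs'.getD 0 s ∈ ends g ∧ ρ g ≤ a) →
      (t ∈ ends (es'.getD (es'.length - 1) st) ∨
        ∃ h ∈ S, vs'.getD (vs'.length - 1) s ∈ ends h ∧ b ≤ ρ h) →
      ∃ (S' : Finset E) (ρ' : E → ℚ), Inv ends s t st S' ρ' ∧ S ⊆ S' ∧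
        ∃ e0', e0' ∈ S' ∧ e0' ∉ S := by
    intro vs' es' hw' hne' hnd' hes' hu' hw'c he0' a b hab hf hl
    obtain ⟨ρ', hInv'⟩ := insert_ear hInv hw' hne' hnd' hes' hu' hw'c hab hf hl
    exact ⟨S ∪ es'.toFinset, ρ', hInv', Finset.subset_union_left, e0,
      Finset.mem_union_right _ (List.mem_toFinset.2 he0'), h0S⟩
  have hlenQ := walk_length hwQ
  have hQpos : 0 < esQ.length := List.length_pos_iff.2 hneQ
  have hrev_w := walk_reverse hwQ s st
  have hrv0 : vsQ.reverse.getD 0 s = vsQ.getD (vsQ.length - 1) s := by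
    rw [getD_reverse s (by omega), Nat.sub_zero]
  have hrvl : vsQ.reverse.getD (vsQ.reverse.length - 1) s = vsQ.getD 0 s := by
    rw [List.length_reverse, getD_reverse s (by omega)]
    congr 1
    omega
  have hre0 : esQ.reverse.getD 0 st = esQ.getD (esQ.length - 1) st := by
    rw [getD_reverse st (by omega), Nat.sub_zero]
  have hrel : esQ.reverse.getD (esQ.reverse.length - 1) st = esQ.getD 0 st := by
    rw [List.length_reverse, getD_reverse st (by omega)]
    congr 1
    omega
  have hes_rev : ∀ e ∈ esQ.reverse, e ∉ S ∧ e ≠ st :=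
    fun e he => hesQ e (List.mem_reverse.1 he)
  have hfeu : vsQ.getD 0 s ∈ ends (esQ.getD 0 st) := by
    rw [walk_nth hwQ s st 0 hQpos]
    exact Sym2.mem_iff.2 (Or.inl rfl)
  have hlew : vsQ.getD (vsQ.length - 1) s ∈ ends (esQ.getD (esQ.length - 1) st) := by
    rw [walk_nth hwQ s st (esQ.length - 1) (by omega)]
    have h1 : esQ.length - 1 + 1 = vsQ.length - 1 := by omega
    rw [h1]
    exact Sym2.mem_iff.2 (Or.inr rfl)
  obtain ⟨hstS, hscov, htcov, hinj, hcov2, -, -⟩ := hInv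
  by_cases hc1 : ∃ g ∈ S, ∃ h ∈ S, vsQ.getD 0 s ∈ ends g ∧
      vsQ.getD (vsQ.length - 1) s ∈ ends h ∧ ρ g < ρ h
  · obtain ⟨g, hg, h, hh, hgu, hhw, hlt⟩ := hc1
    exact main vsQ esQ hwQ hneQ hndQ hesQ huC hwC he0Q (ρ g) (ρ h) hlt
      (Or.inr ⟨g, hg, hgu, le_refl _⟩) (Or.inr ⟨h, hh, hhw, le_refl _⟩)
  by_cases hc2 : ∃ g ∈ S, ∃ h ∈ S, vsQ.getD (vsQ.length - 1) s ∈ ends g ∧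
      vsQ.getD 0 s ∈ ends h ∧ ρ g < ρ h
  · obtain ⟨g, hg, h, hh, hgw, hhu, hlt⟩ := hc2
    exact main vsQ.reverse esQ.reverse hrev_w (by simpa using hneQ)
      (by simpa using hndQ) hes_rev (by rw [hrv0]; exact hwC)
      (by rw [hrvl]; exact huC) (List.mem_reverse.2 he0Q) (ρ g) (ρ h) hlt
      (Or.inr ⟨g, hg, by rw [hrv0]; exact hgw, le_refl _⟩)
      (Or.inr ⟨h, hh, by rw [hrvl]; exact hhu, le_refl _⟩)
  obtain ⟨gu, hguS, hguu⟩ := huC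
  obtain ⟨gw, hgwS, hgww⟩ := hwC
  rw [Finset.mem_coe] at hguS hgwS
  have huC' : vsQ.getD 0 s ∈ coverVerts ends (↑S : Set E) := ⟨gu, Finset.mem_coe.2 hguS, hguu⟩
  have hwC' : vsQ.getD (vsQ.length - 1) s ∈ coverVerts ends (↑S : Set E) :=
    ⟨gw, Finset.mem_coe.2 hgwS, hgww⟩
  have hall : ∀ g ∈ S, ∀ h ∈ S, vsQ.getD 0 s ∈ ends g →
      vsQ.getD (vsQ.length - 1) s ∈ ends h → ρ g = ρ h := by
    intro g hg h hh hgu hhw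
    rcases lt_trichotomy (ρ g) (ρ h) with hlt | he | hlt
    · exact absurd ⟨g, hg, h, hh, hgu, hhw, hlt⟩ hc1
    · exact he
    · exact absurd ⟨h, hh, g, hg, hhw, hgu, hlt⟩ hc2
  have hu_st : vsQ.getD 0 s = s ∨ vsQ.getD 0 s = t := by
    by_contra hcon
    push_neg at hcon
    obtain ⟨e, he, f, hf, hef, h1, h2⟩ := hcov2 _ huC' hcon.1 hcon.2
    exact hef (hinj e he f hf
      ((hall e he gw hgwS h1 hgww).trans (hall f hf gw hgwS h2 hgww).symm))
  have hw_st : vsQ.getD (vsQ.length - 1) s = s ∨ vsQ.getD (vsQ.length - 1) s = t := by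
    by_contra hcon
    push_neg at hcon
    obtain ⟨e, he, f, hf, hef, h1, h2⟩ := hcov2 _ hwC' hcon.1 hcon.2
    exact hef (hinj e he f hf
      ((hall gu hguS e he hguu h1).symm.trans (hall gu hguS f hf hguu h2)))
  rcases hu_st with hus | hut
  · rcases hw_st with hws | hwt
    · exact main vsQ esQ hwQ hneQ hndQ hesQ huC' hwC' he0Q (ρ gu - 1) (ρ gu)
        (by linarith)
        (Or.inl (by rw [← hus]; exact hfeu))
        (Or.inr ⟨gu, hguS, by rw [hws, ← hus]; exact hguu, le_refl _⟩)
    · exact main vsQ esQ hwQ hneQ hndQ hesQ huC' hwC' he0Q (ρ gu) (ρ gu + 1)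
        (by linarith)
        (Or.inl (by rw [← hus]; exact hfeu))
        (Or.inl (by rw [← hwt]; exact hlew))
  · rcases hw_st with hws | hwt
    · refine main vsQ.reverse esQ.reverse hrev_w (by simpa using hneQ)
        (by simpa using hndQ) hes_rev (by rw [hrv0]; exact hwC')
        (by rw [hrvl]; exact huC') (List.mem_reverse.2 he0Q) 0 1 one_pos
        (Or.inl ?_) (Or.inl ?_)
      · rw [hre0, ← hws]
        exact hlew
      · rw [hrel, ← hut]
        exact hfeu
    · exact main vsQ esQ hwQ hneQ hndQ hesQ huC' hwC' he0Q (ρ gu) (ρ gu + 1)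
        (by linarith)
        (Or.inr ⟨gu, hguS, hguu, le_refl _⟩)
        (Or.inl (by rw [← hwt]; exact hlew))

end Step

section Final

variable {ends : E → Sym2 V} {s t : V} {st : E}

lemma grow [Fintype V] [Fintype E] [DecidableEq E] (hEC : EdgeConnected ends 2)
    (hst : ends st = s(s, t)) :
    ∀ (n : ℕ) (S : Finset E) (ρ : E → ℚ), Inv ends s t st S ρ →
      (Finset.univ \ insert st S).card ≤ n →
      ∃ (S' : Finset E) (ρ' : E → ℚ), Inv ends s t st S' ρ' ∧
        ∀ e : E, e ≠ st → e ∈ S' := by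
  intro n
  induction n with
  | zero =>
    intro S ρ hInv hcard
    refine ⟨S, ρ, hInv, ?_⟩
    intro e he
    by_contra hcon
    have h1 : e ∈ Finset.univ \ insert st S := by simp [he, hcon]
    have := Finset.card_pos.2 ⟨e, h1⟩
    omega
  | succ n ih =>
    intro S ρ hInv hcard
    by_cases hfull : ∀ e : E, e ≠ st → e ∈ S
    · exact ⟨S, ρ, hInv, hfull⟩
    · push_neg at hfull
      obtain ⟨e', he'st, he'S⟩ := hfull
      obtain ⟨S', ρ', hInv', hsub, e0, he0S', he0S⟩ := step hEC hst hInv he'S he'st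
      apply ih S' ρ' hInv'
      have hsub2 : insert st S ⊆ insert st S' := Finset.insert_subset_insert _ hsub
      have h1 : Finset.univ \ insert st S' ⊆ Finset.univ \ insert st S :=
        Finset.sdiff_subset_sdiff (le_refl _) hsub2
      have he0st : e0 ≠ st := fun hc => hInv'.1 (hc ▸ he0S')
      have hss : Finset.univ \ insert st S' ⊂ Finset.univ \ insert st S :=
        (Finset.ssubset_iff_of_subset h1).2
          ⟨e0, by simp [he0S, he0st], by simp [he0S']⟩
      have := Finset.card_lt_card hss
      omega

theorem statement_1' [Fintype V] [Fintype E] (s t : V) (st : E)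
    (hst : ends st = s(s, t)) (hloop : s ≠ t)
    (h2 : EdgeConnected ends 2) :
    ∃ lt : E → E → Prop, IsOneOneEdgeOrder ends s t st lt := by
  classical
  obtain ⟨vs0, es0, hw0, hh0, hl0, hsub0⟩ := h2.2 {st} (by simp) s t
  have hlen0 := walk_length hw0
  have hne0 : es0 ≠ [] := by
    rintro rfl
    obtain ⟨x, rfl⟩ : ∃ x, vs0 = [x] := by
      match vs0, hlen0 with | [x], _ => exact ⟨x, rfl⟩
    simp at hh0 hl0
    exact hloop (hh0.symm.trans hl0)
  obtain ⟨efirst, hef⟩ := List.exists_mem_of_ne_nil es0 hne0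
  have hefst : efirst ≠ st := by
    have := hsub0 efirst hef
    simpa using this
  have hcard : 2 ≤ Fintype.card E := by
    have : Nontrivial E := ⟨⟨efirst, st, hefst⟩⟩
    exact Fintype.one_lt_card
  obtain ⟨S0, ρ0, hInv0⟩ := init h2 hst hloop
  obtain ⟨S, ρ, hInv, hfull⟩ := grow h2 hst (Finset.univ \ insert st S0).card S0 ρ0
    hInv0 (le_refl _)
  obtain ⟨hstS, hscov, htcov, hinj, hcov2, hearl, hlate⟩ := hInv
  refine ⟨fun e f => e ∈ S ∧ f ∈ S ∧ ρ e < ρ f, hcard, ?_, ?_, ?_, ?_, ?_, ?_⟩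
  · rintro e f ⟨he, hf, -⟩
    exact ⟨fun hc => hstS (hc ▸ he), fun hc => hstS (hc ▸ hf)⟩
  · rintro e ⟨-, -, hlt⟩
    exact lt_irrefl _ hlt
  · rintro e f g ⟨he, hf, h1⟩ ⟨-, hg, hfg⟩
    exact ⟨he, hg, h1.trans hfg⟩
  · intro e f he hf hef
    have heS := hfull e he
    have hfS := hfull f hf
    rcases lt_trichotomy (ρ e) (ρ f) with h | h | h
    · exact Or.inl ⟨heS, hfS, h⟩
    · exact absurd (hinj e heS f hfS h) hef
    · exact Or.inr ⟨hfS, heS, h⟩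
  · intro e he hse
    obtain ⟨f, hf, hnb, hlt⟩ := hearl e (hfull e he) hse
    exact ⟨f, hnb, hf, hfull e he, hlt⟩
  · intro e he hte
    obtain ⟨f, hf, hnb, hlt⟩ := hlate e (hfull e he) hte
    exact ⟨f, hnb, hfull e he, hf, hlt⟩

end Final

/-- Every 2-edge-connected multigraph with a non-self-loop
edge `st` has a (1,1)-edge-order through `st`. -/
theorem statement_1 {V E : Type} [Fintype V] [Fintype E] (ends : E → Sym2 V)
    (s t : V) (st : E) (hst : ends st = s(s, t)) (hloop : s ≠ t)
    (h2 : EdgeConnected ends 2) :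
    ∃ lt : E → E → Prop, IsOneOneEdgeOrder ends s t st lt := by
  exact statement_1' s t st hst hloop h2

end EdgeOrders
end

section
/- Let D = (P_0, …, P_{m−n}) be a (2,1)-edge-order of a graph G through rt avoiding ru. Then for every index i with 0 ≤ i < m−n, the subgraph \overline{G_i} of G induced by the edges not in P_0 ∪ ⋯ ∪ P_i is connected. -/
namespace EdgeOrders

variable {V E V' E' : Type}

variable {ends : E → Sym2 V}

section Helpers

variable {ends' : E → Sym2 V}

lemma IsWalkSeq.length_eq' {vs : List V} {es : List E} (h : IsWalkSeq ends' vs es) :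
    vs.length = es.length + 1 := by
  induction h with
  | nil v => simp
  | cons h1 h2 ih => simp at ih ⊢; omega

lemma IsWalkSeq.snoc' {vs : List V} {es : List E} (h : IsWalkSeq ends' vs es) :
    ∀ {a b : V} {e : E}, vs.getLast? = some a → ends' e = s(a, b) →
      IsWalkSeq ends' (vs ++ [b]) (es ++ [e]) := by
  induction h with
  | nil v =>
    intro a b e ha he
    simp at ha; subst ha
    exact .cons he (.nil b)
  | @cons u v vs e es h1 h2 ih =>
    intro a b e' ha he
    rw [List.getLast?_cons_cons] at ha
    exact .cons h1 (ih ha he)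

lemma IsWalkSeq.reverse' {vs : List V} {es : List E} (h : IsWalkSeq ends' vs es) :
    IsWalkSeq ends' vs.reverse es.reverse := by
  induction h with
  | nil v => exact .nil v
  | @cons u v vs e es h1 h2 ih =>
    have hv : (v :: vs).reverse.getLast? = some v := by
      rw [List.getLast?_reverse]; rfl
    simpa [List.reverse_cons] using ih.snoc' hv (by rw [h1, Sym2.eq_swap])

lemma IsWalkSeq.append' {vs₁ : List V} {es₁ : List E} (h₁ : IsWalkSeq ends' vs₁ es₁) :
    ∀ {w : V} {vs₂ : List V} {es₂ : List E}, vs₁.getLast? = some w →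
      IsWalkSeq ends' (w :: vs₂) es₂ → IsWalkSeq ends' (vs₁ ++ vs₂) (es₁ ++ es₂) := by
  induction h₁ with
  | nil v =>
    intro w vs₂ es₂ hw h₂
    simp at hw; subst hw
    simpa using h₂
  | @cons u v vs e es h1 h2 ih =>
    intro w vs₂ es₂ hw h₂
    rw [List.getLast?_cons_cons] at hw
    exact .cons h1 (ih hw h₂)

lemma hasWalk_refl' (S : Set E) (v : V) : HasWalk ends' S v v :=
  ⟨[v], [], .nil v, rfl, rfl, by simp⟩

lemma HasWalk.mono' {S S' : Set E} {a b : V} (h : HasWalk ends' S a b)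
    (hs : ∀ e ∈ S, e ∈ S') : HasWalk ends' S' a b := by
  obtain ⟨vs, es, h1, h2, h3, h4⟩ := h
  exact ⟨vs, es, h1, h2, h3, fun e he => hs e (h4 e he)⟩

lemma HasWalk.symm' {S : Set E} {a b : V} (h : HasWalk ends' S a b) :
    HasWalk ends' S b a := by
  obtain ⟨vs, es, h1, h2, h3, h4⟩ := h
  exact ⟨vs.reverse, es.reverse, h1.reverse', by rwa [List.head?_reverse],
    by rwa [List.getLast?_reverse], fun e he => h4 e (List.mem_reverse.mp he)⟩

lemma HasWalk.trans' {S : Set E} {a b c : V} (h : HasWalk ends' S a b)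
    (h' : HasWalk ends' S b c) : HasWalk ends' S a c := by
  obtain ⟨vs₁, es₁, h1, h2, h3, h4⟩ := h
  obtain ⟨vs₂, es₂, g1, g2, g3, g4⟩ := h'
  cases vs₂ with
  | nil => simp at g2
  | cons b' t =>
    simp at g2; subst g2
    cases t with
    | nil =>
      simp at g3; subst g3
      exact ⟨vs₁, es₁, h1, h2, h3, h4⟩
    | cons v t' =>
      refine ⟨vs₁ ++ (v :: t'), es₁ ++ es₂, h1.append' h3 g1, ?_, ?_, ?_⟩
      · cases vs₁ with
        | nil => simp at h2
        | cons a' t₁ => simpa using h2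
      · rw [List.getLast?_cons_cons] at g3
        rw [List.getLast?_append_of_ne_nil _ (by simp)]
        exact g3
      · intro e he
        rcases List.mem_append.mp he with h | h
        exacts [h4 e h, g4 e h]

lemma IsWalkSeq.walk_from_head' {vs : List V} {es : List E} (h : IsWalkSeq ends' vs es) :
    ∀ {h0 x : V}, vs.head? = some h0 → x ∈ vs → HasWalk ends' {e | e ∈ es} h0 x := by
  induction h with
  | nil v =>
    intro h0 x hh hx
    simp at hh hx; subst hh; subst hx
    exact hasWalk_refl' _ _
  | @cons u v vs e es h1 h2 ih =>
    intro h0 x hh hx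
    simp at hh; subst hh
    rcases List.mem_cons.mp hx with rfl | hx'
    · exact hasWalk_refl' _ _
    · have w := (ih (h0 := v) rfl hx').mono' (S' := {e' | e' ∈ e :: es})
        (fun e' he' => List.mem_cons_of_mem e he')
      obtain ⟨vs', es', g1, g2, g3, g4⟩ := w
      cases vs' with
      | nil => simp at g2
      | cons v' t =>
        simp at g2; subst g2
        refine ⟨u :: v' :: t, e :: es', .cons h1 g1, rfl, ?_, ?_⟩
        · rw [List.getLast?_cons_cons]; exact g3
        · intro e' he'
          rcases List.mem_cons.mp he' with rfl | hmem
          exacts [List.mem_cons_self, g4 e' hmem]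

lemma IsWalkSeq.walk_mem_mem' {vs : List V} {es : List E} (h : IsWalkSeq ends' vs es)
    {x y : V} (hx : x ∈ vs) (hy : y ∈ vs) : HasWalk ends' {e | e ∈ es} x y := by
  cases vs with
  | nil => simp at hx
  | cons a t => exact (h.walk_from_head' rfl hx).symm'.trans' (h.walk_from_head' rfl hy)

lemma IsWalkSeq.mem_verts_of_mem_ends' {vs : List V} {es : List E}
    (h : IsWalkSeq ends' vs es) {e : E} {x : V} (he : e ∈ es) (hx : x ∈ ends' e) :
    x ∈ vs := by
  induction h with
  | nil v => simp at he
  | @cons u v vs e' es h1 h2 ih =>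
    rcases List.mem_cons.mp he with rfl | he'
    · rw [h1] at hx
      rcases Sym2.mem_iff.mp hx with rfl | rfl
      · exact List.mem_cons_self
      · exact List.mem_cons_of_mem _ (List.mem_cons_self)
    · exact List.mem_cons_of_mem _ (ih he')

end Helpers

/-- If `D` is a (2,1)-edge-order of `G` through `rt` avoiding
`ru`, then for every `0 ≤ i < m - n` the subgraph `\overline{G_i}` induced by
the edges not in `P₀ ∪ ⋯ ∪ P_i` is connected. -/
theorem statement_2 {V E : Type} [Fintype V] [Fintype E] (ends : E → Sym2 V)
    (rt ru : E) (r t u : V)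
    (hrt : ends rt = s(r, t)) (hru : ends ru = s(r, u)) (hne : rt ≠ ru)
    (D : EarDecomposition ends) (hD : IsTwoOneEdgeOrder D rt ru) :
    ∀ i : Fin (D.len + 1), (i : ℕ) < D.len → ConnectedOn ends (D.remEdges i) := by
  have hlast : ru ∈ (D.ears (Fin.last D.len)).edges := by rw [hD.2.1]; simp
  have main : ∀ d : ℕ, ∀ i : Fin (D.len + 1), (i : ℕ) < D.len → D.len - (i : ℕ) ≤ d →
      ∀ x, x ∈ coverVerts ends (D.remEdges i) → HasWalk ends (D.remEdges i) x r := by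
    intro d
    induction d with
    | zero => intro i hi hle; exfalso; omega
    | succ d ih =>
      intro i hi _hle x hx
      obtain ⟨e, ⟨j, hij, hej⟩, hxe⟩ := hx
      have hijn : (i : ℕ) < (j : ℕ) := hij
      by_cases hj : (j : ℕ) = D.len
      · have hjl : j = Fin.last D.len := Fin.ext hj
        subst hjl
        have he : e = ru := by rw [hD.2.1] at hej; simpa using hej
        rw [he, hru] at hxe
        have hruS : ru ∈ D.remEdges i := ⟨Fin.last D.len, hij, hlast⟩
        rcases Sym2.mem_iff.mp hxe with h | h
        · rw [h]; exact hasWalk_refl' _ _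
        · rw [h]
          exact ⟨[u, r], [ru], .cons (by rw [hru, Sym2.eq_swap]) (.nil r), rfl, rfl,
            by simpa using hruS⟩
      · have hjlen : (j : ℕ) < D.len := lt_of_le_of_ne (Nat.lt_succ_iff.mp j.isLt) hj
        have hjpos : 0 < (j : ℕ) := lt_of_le_of_lt (Nat.zero_le _) hijn
        have hwalkj := D.walk j
        have hsub_ear : ∀ e' ∈ (D.ears j).edges, e' ∈ D.remEdges i :=
          fun e' he' => ⟨j, hij, he'⟩
        have hsub_rem : ∀ e' ∈ D.remEdges j, e' ∈ D.remEdges i := by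
          rintro e' ⟨k, hk, hek⟩; exact ⟨k, lt_trans hij hk, hek⟩
        obtain ⟨x₀, hx₀v, hx₀c⟩ :
            ∃ x₀, x₀ ∈ (D.ears j).verts ∧ x₀ ∈ coverVerts ends (D.remEdges j) := by
          by_cases hlen1 : (D.ears j).edges.length = 1
          · obtain ⟨x₀, hx₀, hc⟩ := (hD.2.2 j hjlen).2 hlen1
            refine ⟨x₀, ?_, hc⟩
            rcases hx₀ with h | h
            · exact List.mem_of_mem_head? h
            · exact List.mem_of_mem_getLast? h
          · have hlen2 : 2 ≤ (D.ears j).edges.length := by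
              have h0 := D.ear_nonempty j
              have : (D.ears j).edges.length ≠ 0 := by
                simpa [List.length_eq_zero_iff] using h0
              omega
            have hvlen : 3 ≤ (D.ears j).verts.length := by
              rw [hwalkj.length_eq']; omega
            have hne' : (D.ears j).verts.tail.dropLast ≠ [] := by
              have hl : (D.ears j).verts.tail.dropLast.length
                  = (D.ears j).verts.length - 2 := by
                rw [List.length_dropLast, List.length_tail]; omega
              intro hcon
              rw [hcon] at hl
              simp at hl
              omega
            obtain ⟨y, hy⟩ := List.exists_mem_of_ne_nil _ hne'
            have hyv : y ∈ (D.ears j).verts :=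
              List.mem_of_mem_tail (List.mem_of_mem_dropLast hy)
            refine ⟨y, hyv, (hD.2.2 j hjlen).1 y ⟨hyv, ?_⟩⟩
            rintro ⟨k, hk, hyk⟩
            exact D.ear_inner_new j hjpos y hy k hk hyk
        have hxv : x ∈ (D.ears j).verts := hwalkj.mem_verts_of_mem_ends' hej hxe
        have w1 : HasWalk ends (D.remEdges i) x x₀ :=
          (hwalkj.walk_mem_mem' hxv hx₀v).mono' (fun e' he' => hsub_ear e' he')
        have w2 : HasWalk ends (D.remEdges j) x₀ r :=
          ih j hjlen (by omega) x₀ hx₀c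
        exact w1.trans' (w2.mono' hsub_rem)
  intro i hi a ha b hb
  exact (main D.len i hi (by omega) a ha).trans' ((main D.len i hi (by omega) b hb).symm')

end EdgeOrders
end

section
/- Let D be a (2,1)-edge-order of a graph G through rt avoiding ru. Then for every vertex v of G, the ear P_{last_D(v)} has v as an endpoint. -/
namespace EdgeOrders

variable {V E V' E' : Type}

variable {ends : E → Sym2 V}

lemma walk_endpoints_mem {ends : E → Sym2 V} {vs : List V} {es : List E}
    (h : IsWalkSeq ends vs es) {e : E} (he : e ∈ es) {x : V} (hx : x ∈ ends e) :
    x ∈ vs := by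
  induction h with
  | nil v => simp at he
  | cons h9 hw ih =>
    rcases List.mem_cons.1 he with rfl | he'
    · rw [h9] at hx
      rcases Sym2.mem_iff.1 hx with rfl | rfl
      · exact List.mem_cons_self
      · exact List.mem_cons_of_mem _ (List.mem_cons_self)
    · exact List.mem_cons_of_mem _ (ih he')

lemma walk_single {ends : E → Sym2 V} {b : V} {l : List V}
    (h : IsWalkSeq ends (b :: l) []) : l = [] := by
  cases h; rfl

lemma vert_has_edge {ends : E → Sym2 V} {vs : List V} {es : List E}
    (h : IsWalkSeq ends vs es) (hes : es ≠ []) {v : V} (hv : v ∈ vs) :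
    ∃ e ∈ es, v ∈ ends e := by
  induction h with
  | nil w => exact absurd rfl hes
  | @cons u w vs' e es' h9 hw ih =>
    rcases List.mem_cons.1 hv with rfl | hv'
    · exact ⟨e, List.mem_cons_self, by rw [h9]; exact Sym2.mem_mk_left _ _⟩
    · by_cases hes' : es' = []
      · subst hes'
        have := walk_single hw
        subst this
        have : v = w := by simpa using hv'
        subst this
        exact ⟨e, List.mem_cons_self, by rw [h9]; exact Sym2.mem_mk_right _ _⟩
      · obtain ⟨f, hf, hvf⟩ := ih hes' hv'
        exact ⟨f, List.mem_cons_of_mem _ hf, hvf⟩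

lemma walk_shape {ends : E → Sym2 V} {vs : List V} {es : List E}
    (h : IsWalkSeq ends vs es) (hes : es ≠ []) :
    ∃ a b rest, vs = a :: b :: rest := by
  cases h with
  | nil v => exact absurd rfl hes
  | cons h9 hw => exact ⟨_, _, _, rfl⟩

lemma birthE_mem {ends : E → Sym2 V} (D : EarDecomposition ends) (e : E) :
    e ∈ (D.ears (D.birthE e)).edges := (D.partition e).exists.choose_spec

lemma birthE_unique {ends : E → Sym2 V} (D : EarDecomposition ends) {e : E}
    {j : Fin (D.len + 1)} (h : e ∈ (D.ears j).edges) : j = D.birthE e := by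
  obtain ⟨i, hi, huniq⟩ := D.partition e
  exact (huniq j h).trans (huniq _ (birthE_mem D e)).symm

/-- If `D` is a (2,1)-edge-order of `G` through `rt` avoiding
`ru`, then for every vertex `v`, the ear `P_{last(v)}` has `v` as an endpoint. -/
theorem statement_5 {V E : Type} [Fintype V] [Fintype E] (ends : E → Sym2 V)
    (rt ru : E) (r t u : V)
    (hrt : ends rt = s(r, t)) (hru : ends ru = s(r, u)) (hne : rt ≠ ru)
    (D : EarDecomposition ends) (hD : IsTwoOneEdgeOrder D rt ru) :
    ∀ v : V, ∃ i : Fin (D.len + 1), (i : ℕ) = D.lastV v ∧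
      ((D.ears i).verts.head? = some v ∨ (D.ears i).verts.getLast? = some v) := by
  classical
  intro v
  obtain ⟨i0, hvi0⟩ := D.covers v
  obtain ⟨e0, he0, hve0⟩ := vert_has_edge (D.walk i0) (D.ear_nonempty i0) hvi0
  have hsne : (Finset.univ.filter fun e => v ∈ ends e).Nonempty :=
    ⟨e0, by simp [hve0]⟩
  obtain ⟨e, hes, hsup⟩ := Finset.exists_mem_eq_sup _ hsne
    (fun e => ((D.birthE e : ℕ)))
  have hve : v ∈ ends e := by simpa using hes
  have hlast : D.lastV v = ((D.birthE e : ℕ)) := hsup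
  set i := D.birthE e with hi
  refine ⟨i, hlast.symm, ?_⟩
  by_cases hilen : (i : ℕ) = D.len
  · -- last ear: it is the single edge ru, so its walk has exactly two vertices
    have hiL : i = Fin.last D.len := Fin.ext (by simpa using hilen)
    have hmem : e ∈ (D.ears i).edges := birthE_mem D e
    have hed : (D.ears i).edges = [ru] := by rw [hiL]; exact hD.2.1
    rw [hed] at hmem
    have heru : e = ru := by simpa using hmem
    have hw := D.walk i
    rw [hed] at hw
    obtain ⟨a, b, rest, hverts, h9⟩ :
        ∃ a b rest, (D.ears i).verts = a :: b :: rest ∧ ends ru = s(a, b) := by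
      generalize hvv : (D.ears i).verts = vv at hw
      cases hw with
      | cons h9 ht =>
        have := walk_single ht
        subst this
        exact ⟨_, _, _, rfl, h9⟩
    have hrest : rest = [] := by
      -- a walk with one edge has two vertices; here (b :: rest) walk with []
      have hw := D.walk i
      rw [hed, hverts] at hw
      cases hw with
      | cons h9' ht => exact walk_single ht
    subst hrest
    rw [heru, h9] at hve
    rcases Sym2.mem_iff.1 hve with rfl | rfl
    · left; rw [hverts]; rfl
    · right; rw [hverts]; rfl
  · have hilt : (i : ℕ) < D.len :=
      lt_of_le_of_ne (Nat.lt_succ_iff.mp i.isLt) hilen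
    have hvmem : v ∈ (D.ears i).verts :=
      walk_endpoints_mem (D.walk i) (birthE_mem D e) hve
    by_contra hcon
    push_neg at hcon
    obtain ⟨hch, hcl⟩ := hcon
    obtain ⟨a, b, rest, hverts⟩ := walk_shape (D.walk i) (D.ear_nonempty i)
    -- v is an inner vertex of ear i
    have hvtail : v ∈ (b :: rest) := by
      rw [hverts] at hvmem
      rcases List.mem_cons.1 hvmem with rfl | hv'
      · exact absurd (by rw [hverts]; rfl) hch
      · exact hv'
    have htne : (b :: rest) ≠ [] := by simp
    have hvdl : v ∈ (b :: rest).dropLast := by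
      have hsplit := List.dropLast_append_getLast htne
      have : v ∈ (b :: rest).dropLast ++ [(b :: rest).getLast htne] := by
        rw [hsplit]; exact hvtail
      rcases List.mem_append.1 this with h | h
      · exact h
      · exfalso
        have hvgl : v = (b :: rest).getLast htne := by simpa using h
        apply hcl
        rw [hverts, hvgl]
        rw [List.getLast?_eq_getLast (l := a :: b :: rest) (by simp)]
        exact congrArg some (List.getLast_cons htne)
    have hvdl' : v ∈ (D.ears i).verts.tail.dropLast := by
      rw [hverts]; exact hvdl
    have hinner : v ∈ D.innerVerts i := by
      refine ⟨hvmem, ?_⟩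
      rintro ⟨j, hj, hvj⟩
      rcases Nat.eq_zero_or_pos (i : ℕ) with hi0 | hipos
      · have : (j : ℕ) < (i : ℕ) := hj
        omega
      · exact D.ear_inner_new i hipos v hvdl' j hj hvj
    obtain ⟨e', ⟨j, hij, hej⟩, hve'⟩ := (hD.2.2 i hilt).1 v hinner
    have hje : j = D.birthE e' := birthE_unique D hej
    have hle : ((D.birthE e' : ℕ)) ≤ D.lastV v :=
      Finset.le_sup (f := fun e => ((D.birthE e : ℕ)))
        (s := Finset.univ.filter fun e => v ∈ ends e) (by simp [hve'])
    rw [← hje] at hle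
    have : (i : ℕ) < (j : ℕ) := hij
    omega

end EdgeOrders
end
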